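/- Let V ⊂ ℝ³ be a bounded open set containing the origin and let ρ(x) = |x|. Suppose v is smooth on V \ {0} and satisfies Σ_{|α| ≤ m} ‖ρ^{-a+|α|} ∂^α v‖²_{L²(V)} < ∞ for some integer m ≥ 0 and real a. Then for every integer 0 ≤ l ≤ m, the function ρ^{-a+l} v lies in H^l(V) and ‖ρ^{-a+l} v‖²_{H^l(V)} ≤ C Σ_{|α| ≤ m} ‖ρ^{-a+|α|} ∂^α v‖²_{L²(V)}, where C depends only on m, a, and the diameter of V. -/

import Mathlib

open MeasureTheory

noncomputable section

abbrev P3 := ℝ × ℝ × ℝ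

/-- ρ(x,y,z) = √(x² + y² + z²). -/
def rho3 (p : P3) : ℝ := Real.sqrt (p.1 ^ 2 + p.2.1 ^ 2 + p.2.2 ^ 2)

def pdx (f : P3 → ℝ) : P3 → ℝ := fun p => fderiv ℝ f p (1, 0, 0)
def pdy (f : P3 → ℝ) : P3 → ℝ := fun p => fderiv ℝ f p (0, 1, 0)
def pdz (f : P3 → ℝ) : P3 → ℝ := fun p => fderiv ℝ f p (0, 0, 1)

/-- ∂^α = ∂_x^{α₁} ∂_y^{α₂} ∂_z^{α₃}. -/
def D3 (α : ℕ × ℕ × ℕ) (f : P3 → ℝ) : P3 → ℝ := pdx^[α.1] (pdy^[α.2.1] (pdz^[α.2.2] f))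

/-- |α| = α₁ + α₂ + α₃. -/
def wt3 (α : ℕ × ℕ × ℕ) : ℕ := α.1 + α.2.1 + α.2.2

/-- The multi-indices with |α| ≤ m. -/
def idx3 (m : ℕ) : Finset (ℕ × ℕ × ℕ) :=
  ((Finset.range (m+1)) ×ˢ (Finset.range (m+1)) ×ˢ (Finset.range (m+1))).filter
    fun α => wt3 α ≤ m

/-- Σ_{|α| ≤ m} ‖ρ^{-a+|α|} ∂^α v‖²_{L²(V)}. -/
def WS3 (V : Set P3) (m : ℕ) (a : ℝ) (v : P3 → ℝ) : ℝ :=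
  ∑ α ∈ idx3 m, ∫ p in V, (rho3 p ^ ((wt3 α : ℝ) - a) * D3 α v p) ^ 2

/-- Squared H^l(V) norm: Σ_{|α| ≤ l} ‖∂^α w‖²_{L²(V)}. -/
def HN3 (V : Set P3) (l : ℕ) (w : P3 → ℝ) : ℝ :=
  ∑ α ∈ idx3 l, ∫ p in V, (D3 α w p) ^ 2

-- basics
def sq3 (p : P3) : ℝ := p.1 ^ 2 + p.2.1 ^ 2 + p.2.2 ^ 2

lemma sq3_nonneg (p : P3) : 0 ≤ sq3 p := by unfold sq3; positivity

lemma sq3_ne (p : P3) (hp : p ≠ 0) : sq3 p ≠ 0 := by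
  obtain ⟨x, y, z⟩ := p
  intro h
  simp only [sq3] at h
  apply hp
  have hx : x = 0 := by nlinarith [sq_nonneg x, sq_nonneg y, sq_nonneg z]
  have hy : y = 0 := by nlinarith [sq_nonneg x, sq_nonneg y, sq_nonneg z]
  have hz : z = 0 := by nlinarith [sq_nonneg x, sq_nonneg y, sq_nonneg z]
  simp [hx, hy, hz, Prod.ext_iff]

lemma rho3_rpow (p : P3) (c : ℝ) : rho3 p ^ c = sq3 p ^ (c / 2) := by
  rw [rho3, show (p.1 ^ 2 + p.2.1 ^ 2 + p.2.2 ^ 2) = sq3 p from rfl,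
    Real.sqrt_eq_rpow, ← Real.rpow_mul (sq3_nonneg p)]
  ring_nf

-- the monomial-times-power functions
def tm (i j k : ℕ) (e : ℝ) (p : P3) : ℝ := p.1 ^ i * p.2.1 ^ j * p.2.2 ^ k * sq3 p ^ (e / 2)

lemma tm_congr (i j k : ℕ) {e e' : ℝ} (h : e = e') (p : P3) : tm i j k e p = tm i j k e' p := by rw [h]

-- derivative of tm
lemma tm_hasFDerivAt (i j k : ℕ) (e : ℝ) {p : P3} (hp : sq3 p ≠ 0) :
    ∃ D : P3 →L[ℝ] ℝ, HasFDerivAt (tm i j k e) D p ∧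
      D (1, 0, 0) = i * tm (i - 1) j k e p + e * tm (i + 1) j k (e - 2) p ∧
      D (0, 1, 0) = j * tm i (j - 1) k e p + e * tm i (j + 1) k (e - 2) p ∧
      D (0, 0, 1) = k * tm i j (k - 1) e p + e * tm i j (k + 1) (e - 2) p := by
  have hX : HasFDerivAt (fun q : P3 => q.1) (ContinuousLinearMap.fst ℝ ℝ (ℝ × ℝ)) p :=
    hasFDerivAt_fst
  have hY : HasFDerivAt (fun q : P3 => q.2.1)
      ((ContinuousLinearMap.fst ℝ ℝ ℝ).comp (ContinuousLinearMap.snd ℝ ℝ (ℝ × ℝ))) p :=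
    hasFDerivAt_fst.comp p hasFDerivAt_snd
  have hZ : HasFDerivAt (fun q : P3 => q.2.2)
      ((ContinuousLinearMap.snd ℝ ℝ ℝ).comp (ContinuousLinearMap.snd ℝ ℝ (ℝ × ℝ))) p :=
    hasFDerivAt_snd.comp p hasFDerivAt_snd
  have hXi : ∀ n : ℕ, HasFDerivAt (fun q : P3 => q.1 ^ n)
      (((n : ℝ) * p.1 ^ (n - 1)) • ContinuousLinearMap.fst ℝ ℝ (ℝ × ℝ)) p :=
    fun n => (hasDerivAt_pow n p.1).comp_hasFDerivAt p hX
  have hYj : ∀ n : ℕ, HasFDerivAt (fun q : P3 => q.2.1 ^ n)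
      (((n : ℝ) * p.2.1 ^ (n - 1)) •
        ((ContinuousLinearMap.fst ℝ ℝ ℝ).comp (ContinuousLinearMap.snd ℝ ℝ (ℝ × ℝ)))) p :=
    fun n => (hasDerivAt_pow n p.2.1).comp_hasFDerivAt p hY
  have hZk : ∀ n : ℕ, HasFDerivAt (fun q : P3 => q.2.2 ^ n)
      (((n : ℝ) * p.2.2 ^ (n - 1)) •
        ((ContinuousLinearMap.snd ℝ ℝ ℝ).comp (ContinuousLinearMap.snd ℝ ℝ (ℝ × ℝ)))) p :=
    fun n => (hasDerivAt_pow n p.2.2).comp_hasFDerivAt p hZ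
  have hS0 : HasFDerivAt sq3 _ p := ((hXi 2).add (hYj 2)).add (hZk 2)
  have hS : HasFDerivAt (fun q => sq3 q ^ (e / 2)) _ p := hS0.rpow_const (Or.inl hp)
  have h : HasFDerivAt (tm i j k e) _ p := (((hXi i).mul (hYj j)).mul (hZk k)).mul hS
  refine ⟨_, h, ?_, ?_, ?_⟩ <;>
  · simp only [ContinuousLinearMap.add_apply, ContinuousLinearMap.smul_apply,
      ContinuousLinearMap.comp_apply, ContinuousLinearMap.coe_fst',
      ContinuousLinearMap.coe_snd', smul_eq_mul, tm, Pi.mul_apply,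
      show ((e:ℝ) - 2) / 2 = e / 2 - 1 by ring]
    ring

-- smoothness of directional derivatives
lemma contDiffOn_pd {U : Set P3} (hU : IsOpen U) {f : P3 → ℝ}
    (hf : ContDiffOn ℝ (⊤ : ℕ∞) f U) (u : P3) :
    ContDiffOn ℝ (⊤ : ℕ∞) (fun p => fderiv ℝ f p u) U := by
  have h1 : ContDiffOn ℝ (⊤ : ℕ∞) (fderiv ℝ f) U :=
    hf.fderiv_of_isOpen hU (by exact_mod_cast le_top)
  exact h1.clm_apply contDiffOn_const

lemma contDiffOn_pdx {U : Set P3} (hU : IsOpen U) {f : P3 → ℝ}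
    (hf : ContDiffOn ℝ (⊤ : ℕ∞) f U) : ContDiffOn ℝ (⊤ : ℕ∞) (pdx f) U :=
  contDiffOn_pd hU hf _
lemma contDiffOn_pdy {U : Set P3} (hU : IsOpen U) {f : P3 → ℝ}
    (hf : ContDiffOn ℝ (⊤ : ℕ∞) f U) : ContDiffOn ℝ (⊤ : ℕ∞) (pdy f) U :=
  contDiffOn_pd hU hf _
lemma contDiffOn_pdz {U : Set P3} (hU : IsOpen U) {f : P3 → ℝ}
    (hf : ContDiffOn ℝ (⊤ : ℕ∞) f U) : ContDiffOn ℝ (⊤ : ℕ∞) (pdz f) U :=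
  contDiffOn_pd hU hf _

lemma contDiffOn_iter {U : Set P3} (hU : IsOpen U) (g : (P3 → ℝ) → (P3 → ℝ))
    (hg : ∀ f, ContDiffOn ℝ (⊤ : ℕ∞) f U → ContDiffOn ℝ (⊤ : ℕ∞) (g f) U)
    (n : ℕ) {f : P3 → ℝ} (hf : ContDiffOn ℝ (⊤ : ℕ∞) f U) :
    ContDiffOn ℝ (⊤ : ℕ∞) (g^[n] f) U := by
  induction n with
  | zero => exact hf
  | succ n ih => rw [Function.iterate_succ_apply']; exact hg _ ih

lemma contDiffOn_D3 {U : Set P3} (hU : IsOpen U) {v : P3 → ℝ}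
    (hv : ContDiffOn ℝ (⊤ : ℕ∞) v U) (γ : ℕ × ℕ × ℕ) :
    ContDiffOn ℝ (⊤ : ℕ∞) (D3 γ v) U := by
  exact contDiffOn_iter hU pdx (fun f hf => contDiffOn_pdx hU hf) γ.1
    (contDiffOn_iter hU pdy (fun f hf => contDiffOn_pdy hU hf) γ.2.1
      (contDiffOn_iter hU pdz (fun f hf => contDiffOn_pdz hU hf) γ.2.2 hv))

lemma differentiableAt_D3 {U : Set P3} (hU : IsOpen U) {v : P3 → ℝ}
    (hv : ContDiffOn ℝ (⊤ : ℕ∞) v U) (γ : ℕ × ℕ × ℕ) {p : P3} (hp : p ∈ U) :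
    DifferentiableAt ℝ (D3 γ v) p := by
  have := ((contDiffOn_D3 hU hv γ).differentiableOn (by simp)).differentiableAt
    (hU.mem_nhds hp)
  exact this

-- D3 successor lemmas
lemma D3_succ_x (a b c : ℕ) (v : P3 → ℝ) : pdx (D3 (a, b, c) v) = D3 (a + 1, b, c) v :=
  (Function.iterate_succ_apply' pdx a _).symm

lemma D3_succ_y (b c : ℕ) (v : P3 → ℝ) : pdy (D3 (0, b, c) v) = D3 (0, b + 1, c) v := by
  simp only [D3, Function.iterate_zero_apply]
  exact (Function.iterate_succ_apply' pdy b _).symm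

lemma D3_succ_z (c : ℕ) (v : P3 → ℝ) : pdz (D3 (0, 0, c) v) = D3 (0, 0, c + 1) v := by
  simp only [D3, Function.iterate_zero_apply]
  exact (Function.iterate_succ_apply' pdz c _).symm

-- the origin is null
lemma volume_zero_P3 : volume ({(0 : P3)} : Set P3) = 0 := by
  have h : ({(0 : P3)} : Set P3) ⊆ ({(0:ℝ)} : Set ℝ) ×ˢ (Set.univ : Set (ℝ × ℝ)) := by
    intro p hp
    simp only [Set.mem_singleton_iff] at hp
    subst hp
    constructor <;> simp
  refine measure_mono_null h ?_
  rw [show (volume : Measure P3) = (volume : Measure ℝ).prod volume from rfl, Measure.prod_prod]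
  simp

lemma restrict_V_eq (V : Set P3) :
    volume.restrict V = volume.restrict (V \ {0}) := by
  apply Measure.restrict_congr_set
  rw [MeasureTheory.ae_eq_set]
  constructor
  · exact measure_mono_null (by intro p hp; simp_all) volume_zero_P3
  · exact measure_mono_null (by intro p hp; simp_all) volume_zero_P3

-- list helpers
lemma list_hasFDerivAt {ι : Type} (L : List ι) (F : ι → P3 → ℝ) (F' : ι → P3 →L[ℝ] ℝ) {p : P3}
    (h : ∀ t ∈ L, HasFDerivAt (F t) (F' t) p) :
    HasFDerivAt (fun q => (L.map (fun t => F t q)).sum) (L.map F').sum p := by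
  induction L with
  | nil => simpa using hasFDerivAt_const (0 : ℝ) p
  | cons a L ih =>
    simp only [List.map_cons, List.sum_cons]
    exact (h a (by simp)).add (ih (fun t ht => h t (by simp [ht])))

lemma clm_list_sum_apply {ι : Type} (L : List ι) (F' : ι → P3 →L[ℝ] ℝ) (u : P3) :
    ((L.map F').sum) u = (L.map (fun t => F' t u)).sum := by
  induction L with
  | nil => simp
  | cons a L ih => simp [ih]

lemma list_sum_map_add {ι : Type} (L : List ι) (f g : ι → ℝ) :
    (L.map (fun t => f t + g t)).sum = (L.map f).sum + (L.map g).sum := by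
  induction L with
  | nil => simp
  | cons a L ih => simp [ih]; ring

-- terms
abbrev T3 := ℝ × (ℕ × ℕ × ℕ) × (ℕ × ℕ × ℕ)

def mdeg (mo : ℕ × ℕ × ℕ) : ℕ := mo.1 + mo.2.1 + mo.2.2

def texp (c0 : ℝ) (n : ℕ) (t : T3) : ℝ :=
  c0 - ((n : ℝ) - (wt3 t.2.2 : ℝ)) - (mdeg t.2.1 : ℝ)

def tval (c0 : ℝ) (n : ℕ) (v : P3 → ℝ) (t : T3) (p : P3) : ℝ :=
  t.1 * tm t.2.1.1 t.2.1.2.1 t.2.1.2.2 (texp c0 n t) p * D3 t.2.2 v p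

-- per-term derivative lemmas
lemma tval_deriv_x (c0 : ℝ) (n : ℕ) (v : P3 → ℝ) (t : T3) {p : P3} (hp : sq3 p ≠ 0)
    (hD : DifferentiableAt ℝ (D3 t.2.2 v) p)
    (hD' : DifferentiableAt ℝ (D3 (t.2.2.1 + 1, t.2.2.2.1, t.2.2.2.2) v) p) :
    ∃ D : P3 →L[ℝ] ℝ, HasFDerivAt (fun q => tval c0 n v t q) D p ∧
      D (1, 0, 0) =
        tval c0 (n+1) v (t.1 * (t.2.1.1 : ℝ), (t.2.1.1 - 1, t.2.1.2.1, t.2.1.2.2), t.2.2) p +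
        tval c0 (n+1) v (t.1 * texp c0 n t, (t.2.1.1 + 1, t.2.1.2.1, t.2.1.2.2), t.2.2) p +
        tval c0 (n+1) v (t.1, t.2.1, (t.2.2.1 + 1, t.2.2.2.1, t.2.2.2.2)) p := by
  obtain ⟨c, ⟨i, j, k⟩, γ⟩ := t
  obtain ⟨D, hDt, hx, hy, hz⟩ := tm_hasFDerivAt i j k (texp c0 n (c, (i,j,k), γ)) hp
  refine ⟨_, ((hDt.const_mul c).mul hD.hasFDerivAt), ?_⟩
  simp only [ContinuousLinearMap.add_apply, ContinuousLinearMap.smul_apply, smul_eq_mul]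
  rw [hx]
  have h3 : pdx (D3 γ v) = D3 (γ.1 + 1, γ.2.1, γ.2.2) v := by
    have := D3_succ_x γ.1 γ.2.1 γ.2.2 v
    simpa using this
  have hpd : fderiv ℝ (D3 γ v) p (1, 0, 0) = D3 (γ.1 + 1, γ.2.1, γ.2.2) v p := by
    rw [show (fderiv ℝ (D3 γ v) p) (1, 0, 0) = pdx (D3 γ v) p from rfl, h3]
  rw [hpd]
  simp only [tval, texp, wt3, mdeg]
  have e2 : (c0 - (((n:ℕ)+1:ℕ) - (γ.1 + γ.2.1 + γ.2.2 : ℕ) : ℝ) - ((i+1) + j + k : ℕ))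
      = (c0 - ((n:ℕ) - (γ.1 + γ.2.1 + γ.2.2 : ℕ) : ℝ) - (i + j + k : ℕ)) - 2 := by
    push_cast; ring
  have e3 : (c0 - (((n:ℕ)+1:ℕ) - ((γ.1+1) + γ.2.1 + γ.2.2 : ℕ) : ℝ) - (i + j + k : ℕ))
      = (c0 - ((n:ℕ) - (γ.1 + γ.2.1 + γ.2.2 : ℕ) : ℝ) - (i + j + k : ℕ)) := by
    push_cast; ring
  rw [tm_congr _ _ _ e2, tm_congr _ _ _ e3]
  rcases Nat.eq_zero_or_pos i with hi | hi
  · subst hi; push_cast; ring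
  · obtain ⟨i', rfl⟩ : ∃ i', i = i' + 1 := ⟨i - 1, (Nat.succ_pred_eq_of_pos hi).symm⟩
    have e1 : (c0 - (((n:ℕ)+1:ℕ) - (γ.1 + γ.2.1 + γ.2.2 : ℕ) : ℝ) - ((i'+1) - 1 + j + k : ℕ))
        = (c0 - ((n:ℕ) - (γ.1 + γ.2.1 + γ.2.2 : ℕ) : ℝ) - ((i'+1) + j + k : ℕ)) := by
      push_cast; ring
    rw [tm_congr _ _ _ e1]
    simp only [Nat.add_sub_cancel]
    push_cast; ring

lemma tval_deriv_y (c0 : ℝ) (n : ℕ) (v : P3 → ℝ) (t : T3) {p : P3} (hp : sq3 p ≠ 0)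
    (hγ : t.2.2.1 = 0)
    (hD : DifferentiableAt ℝ (D3 t.2.2 v) p) :
    ∃ D : P3 →L[ℝ] ℝ, HasFDerivAt (fun q => tval c0 n v t q) D p ∧
      D (0, 1, 0) =
        tval c0 (n+1) v (t.1 * (t.2.1.2.1 : ℝ), (t.2.1.1, t.2.1.2.1 - 1, t.2.1.2.2), t.2.2) p +
        tval c0 (n+1) v (t.1 * texp c0 n t, (t.2.1.1, t.2.1.2.1 + 1, t.2.1.2.2), t.2.2) p +
        tval c0 (n+1) v (t.1, t.2.1, (t.2.2.1, t.2.2.2.1 + 1, t.2.2.2.2)) p := by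
  obtain ⟨c, ⟨i, j, k⟩, b0, b, bz⟩ := t
  simp only at hγ
  subst hγ
  obtain ⟨D, hDt, hx, hy, hz⟩ := tm_hasFDerivAt i j k (texp c0 n (c, (i,j,k), (0,b,bz))) hp
  refine ⟨_, ((hDt.const_mul c).mul hD.hasFDerivAt), ?_⟩
  simp only [ContinuousLinearMap.add_apply, ContinuousLinearMap.smul_apply, smul_eq_mul]
  rw [hy]
  have hpd : fderiv ℝ (D3 (0,b,bz) v) p (0, 1, 0) = D3 (0, b + 1, bz) v p := by
    rw [show (fderiv ℝ (D3 (0,b,bz) v) p) (0, 1, 0) = pdy (D3 (0,b,bz) v) p from rfl,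
      D3_succ_y b bz v]
  rw [hpd]
  simp only [tval, texp, wt3, mdeg]
  have e2 : (c0 - (((n:ℕ)+1:ℕ) - (0 + b + bz : ℕ) : ℝ) - (i + (j+1) + k : ℕ))
      = (c0 - ((n:ℕ) - (0 + b + bz : ℕ) : ℝ) - (i + j + k : ℕ)) - 2 := by
    push_cast; ring
  have e3 : (c0 - (((n:ℕ)+1:ℕ) - (0 + (b+1) + bz : ℕ) : ℝ) - (i + j + k : ℕ))
      = (c0 - ((n:ℕ) - (0 + b + bz : ℕ) : ℝ) - (i + j + k : ℕ)) := by
    push_cast; ring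
  rw [tm_congr _ _ _ e2, tm_congr _ _ _ e3]
  rcases Nat.eq_zero_or_pos j with hj | hj
  · subst hj; push_cast; ring
  · obtain ⟨j', rfl⟩ : ∃ j', j = j' + 1 := ⟨j - 1, (Nat.succ_pred_eq_of_pos hj).symm⟩
    have e1 : (c0 - (((n:ℕ)+1:ℕ) - (0 + b + bz : ℕ) : ℝ) - (i + ((j'+1) - 1) + k : ℕ))
        = (c0 - ((n:ℕ) - (0 + b + bz : ℕ) : ℝ) - (i + (j'+1) + k : ℕ)) := by
      push_cast; ring
    rw [tm_congr _ _ _ e1]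
    simp only [Nat.add_sub_cancel]
    push_cast; ring

lemma tval_deriv_z (c0 : ℝ) (n : ℕ) (v : P3 → ℝ) (t : T3) {p : P3} (hp : sq3 p ≠ 0)
    (hγ1 : t.2.2.1 = 0) (hγ2 : t.2.2.2.1 = 0)
    (hD : DifferentiableAt ℝ (D3 t.2.2 v) p) :
    ∃ D : P3 →L[ℝ] ℝ, HasFDerivAt (fun q => tval c0 n v t q) D p ∧
      D (0, 0, 1) =
        tval c0 (n+1) v (t.1 * (t.2.1.2.2 : ℝ), (t.2.1.1, t.2.1.2.1, t.2.1.2.2 - 1), t.2.2) p +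
        tval c0 (n+1) v (t.1 * texp c0 n t, (t.2.1.1, t.2.1.2.1, t.2.1.2.2 + 1), t.2.2) p +
        tval c0 (n+1) v (t.1, t.2.1, (t.2.2.1, t.2.2.2.1, t.2.2.2.2 + 1)) p := by
  obtain ⟨c, ⟨i, j, k⟩, b0, b1, bz2⟩ := t
  simp only at hγ1 hγ2
  subst hγ1
  subst hγ2
  obtain ⟨D, hDt, hx, hy, hz⟩ := tm_hasFDerivAt i j k (texp c0 n (c, (i,j,k), (0,0,bz2))) hp
  refine ⟨_, ((hDt.const_mul c).mul hD.hasFDerivAt), ?_⟩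
  simp only [ContinuousLinearMap.add_apply, ContinuousLinearMap.smul_apply, smul_eq_mul]
  rw [hz]
  have hpd : fderiv ℝ (D3 (0,0,bz2) v) p (0, 0, 1) = D3 (0, 0, bz2 + 1) v p := by
    rw [show (fderiv ℝ (D3 (0,0,bz2) v) p) (0, 0, 1) = pdz (D3 (0,0,bz2) v) p from rfl,
      D3_succ_z bz2 v]
  rw [hpd]
  simp only [tval, texp, wt3, mdeg]
  have e2 : (c0 - (((n:ℕ)+1:ℕ) - (0 + 0 + bz2 : ℕ) : ℝ) - (i + j + (k+1) : ℕ))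
      = (c0 - ((n:ℕ) - (0 + 0 + bz2 : ℕ) : ℝ) - (i + j + k : ℕ)) - 2 := by
    push_cast; ring
  have e3 : (c0 - (((n:ℕ)+1:ℕ) - (0 + 0 + (bz2+1) : ℕ) : ℝ) - (i + j + k : ℕ))
      = (c0 - ((n:ℕ) - (0 + 0 + bz2 : ℕ) : ℝ) - (i + j + k : ℕ)) := by
    push_cast; ring
  rw [tm_congr _ _ _ e2, tm_congr _ _ _ e3]
  rcases Nat.eq_zero_or_pos k with hk | hk
  · subst hk; push_cast; ring
  · obtain ⟨k', rfl⟩ : ∃ k', k = k' + 1 := ⟨k - 1, (Nat.succ_pred_eq_of_pos hk).symm⟩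
    have e1 : (c0 - (((n:ℕ)+1:ℕ) - (0 + 0 + bz2 : ℕ) : ℝ) - (i + j + ((k'+1) - 1) : ℕ))
        = (c0 - ((n:ℕ) - (0 + 0 + bz2 : ℕ) : ℝ) - (i + j + (k'+1) : ℕ)) := by
      push_cast; ring
    rw [tm_congr _ _ _ e1]
    simp only [Nat.add_sub_cancel]
    push_cast; ring

-- step transformations on lists
def stX (c0 : ℝ) (n : ℕ) (L : List T3) : List T3 :=
  L.map (fun t => (t.1 * (t.2.1.1 : ℝ), (t.2.1.1 - 1, t.2.1.2.1, t.2.1.2.2), t.2.2)) ++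
  L.map (fun t => (t.1 * texp c0 n t, (t.2.1.1 + 1, t.2.1.2.1, t.2.1.2.2), t.2.2)) ++
  L.map (fun t => (t.1, t.2.1, (t.2.2.1 + 1, t.2.2.2.1, t.2.2.2.2)))

def stY (c0 : ℝ) (n : ℕ) (L : List T3) : List T3 :=
  L.map (fun t => (t.1 * (t.2.1.2.1 : ℝ), (t.2.1.1, t.2.1.2.1 - 1, t.2.1.2.2), t.2.2)) ++
  L.map (fun t => (t.1 * texp c0 n t, (t.2.1.1, t.2.1.2.1 + 1, t.2.1.2.2), t.2.2)) ++
  L.map (fun t => (t.1, t.2.1, (t.2.2.1, t.2.2.2.1 + 1, t.2.2.2.2)))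

def stZ (c0 : ℝ) (n : ℕ) (L : List T3) : List T3 :=
  L.map (fun t => (t.1 * (t.2.1.2.2 : ℝ), (t.2.1.1, t.2.1.2.1, t.2.1.2.2 - 1), t.2.2)) ++
  L.map (fun t => (t.1 * texp c0 n t, (t.2.1.1, t.2.1.2.1, t.2.1.2.2 + 1), t.2.2)) ++
  L.map (fun t => (t.1, t.2.1, (t.2.2.1, t.2.2.2.1, t.2.2.2.2 + 1)))

-- validity of a representation
def Valid (c0 : ℝ) (v : P3 → ℝ) (U : Set P3) (Q : ℕ × ℕ × ℕ → Prop) (n : ℕ)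
    (L : List T3) (w : P3 → ℝ) : Prop :=
  (∀ t ∈ L, wt3 t.2.2 ≤ n ∧ Q t.2.2) ∧
  ∀ p ∈ U, w p = (L.map (fun t => tval c0 n v t p)).sum

lemma valid_mono {c0 v U Q Q' n L w} (h : Valid c0 v U Q n L w)
    (hQ : ∀ γ, Q γ → Q' γ) : Valid c0 v U Q' n L w :=
  ⟨fun t ht => ⟨(h.1 t ht).1, hQ _ (h.1 t ht).2⟩, h.2⟩

section steps
variable {c0 : ℝ} {v : P3 → ℝ} {U : Set P3} {n : ℕ} {L : List T3} {w : P3 → ℝ}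

lemma valid_step_x (hU : IsOpen U) (hU0 : ∀ p ∈ U, sq3 p ≠ 0)
    (hv : ContDiffOn ℝ (⊤ : ℕ∞) v U)
    (h : Valid c0 v U (fun _ => True) n L w) :
    Valid c0 v U (fun _ => True) (n + 1) (stX c0 n L) (pdx w) := by
  constructor
  · intro t ht
    refine ⟨?_, trivial⟩
    simp only [stX, List.mem_append, List.mem_map] at ht
    rcases ht with (⟨s, hs, rfl⟩ | ⟨s, hs, rfl⟩) | ⟨s, hs, rfl⟩ <;>
      simp only [wt3] <;> have := (h.1 s hs).1 <;> simp only [wt3] at this <;> omega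
  · intro p hp
    have hder : ∀ t : T3, ∃ D : P3 →L[ℝ] ℝ, HasFDerivAt (fun q => tval c0 n v t q) D p ∧
        D (1, 0, 0) =
          tval c0 (n+1) v (t.1 * (t.2.1.1 : ℝ), (t.2.1.1 - 1, t.2.1.2.1, t.2.1.2.2), t.2.2) p +
          tval c0 (n+1) v (t.1 * texp c0 n t, (t.2.1.1 + 1, t.2.1.2.1, t.2.1.2.2), t.2.2) p +
          tval c0 (n+1) v (t.1, t.2.1, (t.2.2.1 + 1, t.2.2.2.1, t.2.2.2.2)) p :=
      fun t => tval_deriv_x c0 n v t (hU0 p hp) (differentiableAt_D3 hU hv _ hp)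
        (differentiableAt_D3 hU hv _ hp)
    choose D hD hDx using hder
    have hsum : HasFDerivAt (fun q => (L.map (fun t => tval c0 n v t q)).sum)
        (L.map D).sum p := list_hasFDerivAt L _ D (fun t _ => hD t)
    have heq : fderiv ℝ w p = (L.map D).sum := by
      rw [Filter.EventuallyEq.fderiv_eq
        (Filter.eventuallyEq_of_mem (hU.mem_nhds hp) (fun q hq => h.2 q hq))]
      exact hsum.fderiv
    show fderiv ℝ w p (1, 0, 0) = _
    rw [heq, clm_list_sum_apply]
    have : (L.map (fun t => (D t) (1, 0, 0))).sum =
        (L.map (fun t =>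
          tval c0 (n+1) v (t.1 * (t.2.1.1 : ℝ), (t.2.1.1 - 1, t.2.1.2.1, t.2.1.2.2), t.2.2) p +
          tval c0 (n+1) v (t.1 * texp c0 n t, (t.2.1.1 + 1, t.2.1.2.1, t.2.1.2.2), t.2.2) p +
          tval c0 (n+1) v (t.1, t.2.1, (t.2.2.1 + 1, t.2.2.2.1, t.2.2.2.2)) p)).sum := by
      congr 1
      exact List.map_congr_left (fun t _ => hDx t)
    rw [this, list_sum_map_add, list_sum_map_add]
    simp only [stX, List.map_append, List.map_map, List.sum_append, Function.comp_def]

lemma valid_step_y (hU : IsOpen U) (hU0 : ∀ p ∈ U, sq3 p ≠ 0)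
    (hv : ContDiffOn ℝ (⊤ : ℕ∞) v U)
    (h : Valid c0 v U (fun γ => γ.1 = 0) n L w) :
    Valid c0 v U (fun γ => γ.1 = 0) (n + 1) (stY c0 n L) (pdy w) := by
  constructor
  · intro t ht
    simp only [stY, List.mem_append, List.mem_map] at ht
    rcases ht with (⟨s, hs, rfl⟩ | ⟨s, hs, rfl⟩) | ⟨s, hs, rfl⟩ <;>
      have := h.1 s hs <;> simp only [wt3] at this ⊢ <;>
      exact ⟨by omega, this.2⟩
  · intro p hp
    have hder : ∀ t : T3, t.2.2.1 = 0 → ∃ D : P3 →L[ℝ] ℝ,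
        HasFDerivAt (fun q => tval c0 n v t q) D p ∧
        D (0, 1, 0) =
          tval c0 (n+1) v (t.1 * (t.2.1.2.1 : ℝ), (t.2.1.1, t.2.1.2.1 - 1, t.2.1.2.2), t.2.2) p +
          tval c0 (n+1) v (t.1 * texp c0 n t, (t.2.1.1, t.2.1.2.1 + 1, t.2.1.2.2), t.2.2) p +
          tval c0 (n+1) v (t.1, t.2.1, (t.2.2.1, t.2.2.2.1 + 1, t.2.2.2.2)) p :=
      fun t htq => tval_deriv_y c0 n v t (hU0 p hp) htq (differentiableAt_D3 hU hv _ hp)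
    classical
    have hder' : ∀ t : T3, ∃ D : P3 →L[ℝ] ℝ,
        HasFDerivAt (fun q => tval c0 n v t q) D p ∧
        (t ∈ L → D (0, 1, 0) =
          tval c0 (n+1) v (t.1 * (t.2.1.2.1 : ℝ), (t.2.1.1, t.2.1.2.1 - 1, t.2.1.2.2), t.2.2) p +
          tval c0 (n+1) v (t.1 * texp c0 n t, (t.2.1.1, t.2.1.2.1 + 1, t.2.1.2.2), t.2.2) p +
          tval c0 (n+1) v (t.1, t.2.1, (t.2.2.1, t.2.2.2.1 + 1, t.2.2.2.2)) p) := by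
      intro t
      by_cases htL : t ∈ L
      · obtain ⟨D, h1, h2⟩ := hder t (h.1 t htL).2
        exact ⟨D, h1, fun _ => h2⟩
      · obtain ⟨D, h1, h2⟩ := tval_deriv_x c0 n v t (hU0 p hp)
          (differentiableAt_D3 hU hv _ hp) (differentiableAt_D3 hU hv _ hp)
        exact ⟨D, h1, fun ht => absurd ht htL⟩
    choose D hD hDy using hder'
    have hsum : HasFDerivAt (fun q => (L.map (fun t => tval c0 n v t q)).sum)
        (L.map D).sum p := list_hasFDerivAt L _ D (fun t _ => hD t)
    have heq : fderiv ℝ w p = (L.map D).sum := by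
      rw [Filter.EventuallyEq.fderiv_eq
        (Filter.eventuallyEq_of_mem (hU.mem_nhds hp) (fun q hq => h.2 q hq))]
      exact hsum.fderiv
    show fderiv ℝ w p (0, 1, 0) = _
    rw [heq, clm_list_sum_apply]
    have : (L.map (fun t => (D t) (0, 1, 0))).sum =
        (L.map (fun t =>
          tval c0 (n+1) v (t.1 * (t.2.1.2.1 : ℝ), (t.2.1.1, t.2.1.2.1 - 1, t.2.1.2.2), t.2.2) p +
          tval c0 (n+1) v (t.1 * texp c0 n t, (t.2.1.1, t.2.1.2.1 + 1, t.2.1.2.2), t.2.2) p +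
          tval c0 (n+1) v (t.1, t.2.1, (t.2.2.1, t.2.2.2.1 + 1, t.2.2.2.2)) p)).sum := by
      congr 1
      exact List.map_congr_left (fun t ht => hDy t ht)
    rw [this, list_sum_map_add, list_sum_map_add]
    simp only [stY, List.map_append, List.map_map, List.sum_append, Function.comp_def]

lemma valid_step_z (hU : IsOpen U) (hU0 : ∀ p ∈ U, sq3 p ≠ 0)
    (hv : ContDiffOn ℝ (⊤ : ℕ∞) v U)
    (h : Valid c0 v U (fun γ => γ.1 = 0 ∧ γ.2.1 = 0) n L w) :
    Valid c0 v U (fun γ => γ.1 = 0 ∧ γ.2.1 = 0) (n + 1) (stZ c0 n L) (pdz w) := by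
  constructor
  · intro t ht
    simp only [stZ, List.mem_append, List.mem_map] at ht
    rcases ht with (⟨s, hs, rfl⟩ | ⟨s, hs, rfl⟩) | ⟨s, hs, rfl⟩ <;>
      have := h.1 s hs <;> simp only [wt3] at this ⊢ <;>
      exact ⟨by omega, this.2⟩
  · intro p hp
    classical
    have hder' : ∀ t : T3, ∃ D : P3 →L[ℝ] ℝ,
        HasFDerivAt (fun q => tval c0 n v t q) D p ∧
        (t ∈ L → D (0, 0, 1) =
          tval c0 (n+1) v (t.1 * (t.2.1.2.2 : ℝ), (t.2.1.1, t.2.1.2.1, t.2.1.2.2 - 1), t.2.2) p +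
          tval c0 (n+1) v (t.1 * texp c0 n t, (t.2.1.1, t.2.1.2.1, t.2.1.2.2 + 1), t.2.2) p +
          tval c0 (n+1) v (t.1, t.2.1, (t.2.2.1, t.2.2.2.1, t.2.2.2.2 + 1)) p) := by
      intro t
      by_cases htL : t ∈ L
      · obtain ⟨D, h1, h2⟩ := tval_deriv_z c0 n v t (hU0 p hp) (h.1 t htL).2.1
          (h.1 t htL).2.2 (differentiableAt_D3 hU hv _ hp)
        exact ⟨D, h1, fun _ => h2⟩
      · obtain ⟨D, h1, h2⟩ := tval_deriv_x c0 n v t (hU0 p hp)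
          (differentiableAt_D3 hU hv _ hp) (differentiableAt_D3 hU hv _ hp)
        exact ⟨D, h1, fun ht => absurd ht htL⟩
    choose D hD hDz using hder'
    have hsum : HasFDerivAt (fun q => (L.map (fun t => tval c0 n v t q)).sum)
        (L.map D).sum p := list_hasFDerivAt L _ D (fun t _ => hD t)
    have heq : fderiv ℝ w p = (L.map D).sum := by
      rw [Filter.EventuallyEq.fderiv_eq
        (Filter.eventuallyEq_of_mem (hU.mem_nhds hp) (fun q hq => h.2 q hq))]
      exact hsum.fderiv
    show fderiv ℝ w p (0, 0, 1) = _
    rw [heq, clm_list_sum_apply]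
    have : (L.map (fun t => (D t) (0, 0, 1))).sum =
        (L.map (fun t =>
          tval c0 (n+1) v (t.1 * (t.2.1.2.2 : ℝ), (t.2.1.1, t.2.1.2.1, t.2.1.2.2 - 1), t.2.2) p +
          tval c0 (n+1) v (t.1 * texp c0 n t, (t.2.1.1, t.2.1.2.1, t.2.1.2.2 + 1), t.2.2) p +
          tval c0 (n+1) v (t.1, t.2.1, (t.2.2.1, t.2.2.2.1, t.2.2.2.2 + 1)) p)).sum := by
      congr 1
      exact List.map_congr_left (fun t ht => hDz t ht)
    rw [this, list_sum_map_add, list_sum_map_add]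
    simp only [stZ, List.map_append, List.map_map, List.sum_append, Function.comp_def]

end steps

-- iteration
def iterSt (st : ℝ → ℕ → List T3 → List T3) (c0 : ℝ) : ℕ → ℕ → List T3 → List T3
  | _, 0, L => L
  | n, k + 1, L => iterSt st c0 (n + 1) k (st c0 n L)

lemma valid_iter {c0 : ℝ} {v : P3 → ℝ} {U : Set P3} {Q : ℕ × ℕ × ℕ → Prop}
    (st : ℝ → ℕ → List T3 → List T3) (pd : (P3 → ℝ) → (P3 → ℝ))
    (hstep : ∀ n L w, Valid c0 v U Q n L w → Valid c0 v U Q (n + 1) (st c0 n L) (pd w)) :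
    ∀ (k n : ℕ) (L : List T3) (w : P3 → ℝ), Valid c0 v U Q n L w →
      Valid c0 v U Q (n + k) (iterSt st c0 n k L) (pd^[k] w) := by
  intro k
  induction k with
  | zero => intro n L w h; simpa [iterSt] using h
  | succ k ih =>
    intro n L w h
    have h1 := hstep n L w h
    have h2 := ih (n + 1) (st c0 n L) (pd w) h1
    rw [Function.iterate_succ_apply]
    rw [show n + (k + 1) = (n + 1) + k by omega]
    exact h2

def baseL : List T3 := [(1, (0, 0, 0), (0, 0, 0))]

def LB (c0 : ℝ) (β : ℕ × ℕ × ℕ) : List T3 :=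
  iterSt stX c0 (β.2.1 + β.2.2) β.1
    (iterSt stY c0 β.2.2 β.2.1
      (iterSt stZ c0 0 β.2.2 baseL))

lemma valid_base {c0 : ℝ} {v : P3 → ℝ} {U : Set P3} :
    Valid c0 v U (fun γ => γ.1 = 0 ∧ γ.2.1 = 0) 0 baseL
      (fun q => tm 0 0 0 c0 q * v q) := by
  constructor
  · intro t ht
    simp only [baseL, List.mem_singleton] at ht
    subst ht
    exact ⟨le_refl _, rfl, rfl⟩
  · intro p hp
    simp only [baseL, List.map_cons, List.map_nil, List.sum_cons, List.sum_nil, tval, texp,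
      wt3, mdeg, D3]
    simp only [Function.iterate_zero_apply]
    norm_num

lemma valid_LB {c0 : ℝ} {v : P3 → ℝ} {U : Set P3} (hU : IsOpen U)
    (hU0 : ∀ p ∈ U, sq3 p ≠ 0) (hv : ContDiffOn ℝ (⊤ : ℕ∞) v U) (β : ℕ × ℕ × ℕ) :
    Valid c0 v U (fun _ => True) (wt3 β) (LB c0 β)
      (D3 β (fun q => tm 0 0 0 c0 q * v q)) := by
  obtain ⟨b1, b2, b3⟩ := β
  have hz := valid_iter stZ pdz (fun n L w h => valid_step_z hU hU0 hv h) b3 0 baseL _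
    (valid_base (c0 := c0))
  rw [show (0 : ℕ) + b3 = b3 by omega] at hz
  have hz' : Valid c0 v U (fun γ => γ.1 = 0) b3 (iterSt stZ c0 0 b3 baseL)
      (pdz^[b3] fun q => tm 0 0 0 c0 q * v q) :=
    valid_mono hz (fun γ hγ => hγ.1)
  have hy := valid_iter stY pdy (fun n L w h => valid_step_y hU hU0 hv h) b2 b3 _ _ hz'
  have hx := valid_iter stX pdx (fun n L w h => valid_step_x hU hU0 hv h) b1 (b3 + b2) _ _
    (valid_mono hy (fun γ _ => trivial))
  have : Valid c0 v U (fun _ => True) (b3 + b2 + b1) (iterSt stX c0 (b3 + b2) b1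
      (iterSt stY c0 b3 b2 (iterSt stZ c0 0 b3 baseL)))
      (pdx^[b1] (pdy^[b2] (pdz^[b3] (fun q => tm 0 0 0 c0 q * v q)))) := hx
  rw [show b3 + b2 + b1 = wt3 (b1, b2, b3) by simp [wt3]; omega] at this
  rw [show b3 + b2 = b2 + b3 by omega] at this
  exact this

lemma mem_idx3 {γ : ℕ × ℕ × ℕ} {m : ℕ} (h : wt3 γ ≤ m) : γ ∈ idx3 m := by
  obtain ⟨g1, g2, g3⟩ := γ
  simp only [wt3] at h
  rw [idx3, Finset.mem_filter, Finset.mem_product, Finset.mem_product, Finset.mem_range,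
    Finset.mem_range, Finset.mem_range]
  exact ⟨⟨by omega, by dsimp only; omega, by dsimp only; omega⟩, by simp only [wt3]; omega⟩

lemma rho3_nonneg (p : P3) : 0 ≤ rho3 p := Real.sqrt_nonneg _

lemma rho3_pos {p : P3} (hp : sq3 p ≠ 0) : 0 < rho3 p := by
  rw [rho3]
  have := sq3_nonneg p
  have : 0 < sq3 p := lt_of_le_of_ne this (Ne.symm hp)
  exact Real.sqrt_pos.mpr (by simpa [sq3] using this)

lemma abs_coord_le_rho3 (p : P3) :
    |p.1| ≤ rho3 p ∧ |p.2.1| ≤ rho3 p ∧ |p.2.2| ≤ rho3 p := by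
  have h1 : ∀ x s : ℝ, x ^ 2 ≤ s → |x| ≤ Real.sqrt s := by
    intro x s hx
    rw [show |x| = Real.sqrt (x ^ 2) by rw [Real.sqrt_sq_eq_abs]]
    exact Real.sqrt_le_sqrt hx
  refine ⟨h1 _ _ (by nlinarith [sq_nonneg p.2.1, sq_nonneg p.2.2]),
    h1 _ _ (by nlinarith [sq_nonneg p.1, sq_nonneg p.2.2]),
    h1 _ _ (by nlinarith [sq_nonneg p.1, sq_nonneg p.2.1])⟩

lemma tm_abs_le (i j k : ℕ) (e : ℝ) {p : P3} (hp : sq3 p ≠ 0) :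
    |tm i j k e p| ≤ rho3 p ^ ((i : ℝ) + j + k + e) := by
  have hρ : 0 < rho3 p := rho3_pos hp
  obtain ⟨h1, h2, h3⟩ := abs_coord_le_rho3 p
  have hs : sq3 p ^ (e / 2) = rho3 p ^ e := (rho3_rpow p e).symm
  have hsnn : (0:ℝ) ≤ sq3 p ^ (e / 2) := Real.rpow_nonneg (sq3_nonneg p) _
  have : |tm i j k e p| = |p.1| ^ i * |p.2.1| ^ j * |p.2.2| ^ k * sq3 p ^ (e / 2) := by
    rw [tm, abs_mul, abs_mul, abs_mul, abs_pow, abs_pow, abs_pow, abs_of_nonneg hsnn]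
  rw [this, hs]
  have hb : |p.1| ^ i * |p.2.1| ^ j * |p.2.2| ^ k ≤ rho3 p ^ i * rho3 p ^ j * rho3 p ^ k := by
    have b1 : |p.1| ^ i ≤ rho3 p ^ i := pow_le_pow_left₀ (abs_nonneg _) h1 i
    have b2 : |p.2.1| ^ j ≤ rho3 p ^ j := pow_le_pow_left₀ (abs_nonneg _) h2 j
    have b3 : |p.2.2| ^ k ≤ rho3 p ^ k := pow_le_pow_left₀ (abs_nonneg _) h3 k
    have := mul_le_mul (mul_le_mul b1 b2 (by positivity) (by positivity)) b3 (by positivity)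
      (by positivity)
    exact this
  have hre : rho3 p ^ i * rho3 p ^ j * rho3 p ^ k * rho3 p ^ e
      = rho3 p ^ ((i : ℝ) + j + k + e) := by
    rw [← Real.rpow_natCast (rho3 p) i, ← Real.rpow_natCast (rho3 p) j,
      ← Real.rpow_natCast (rho3 p) k, ← Real.rpow_add hρ, ← Real.rpow_add hρ,
      ← Real.rpow_add hρ]
  rw [← hre]
  exact mul_le_mul_of_nonneg_right hb (Real.rpow_nonneg hρ.le _)

-- more list helpers
lemma list_abs_sum_le {ι : Type} (L : List ι) (f : ι → ℝ) :
    |(L.map f).sum| ≤ (L.map (fun t => |f t|)).sum := by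
  induction L with
  | nil => simp
  | cons a L ih =>
    simp only [List.map_cons, List.sum_cons]
    exact (abs_add_le _ _).trans (by linarith)

lemma list_sum_le {ι : Type} (L : List ι) (f g : ι → ℝ) (h : ∀ t ∈ L, f t ≤ g t) :
    (L.map f).sum ≤ (L.map g).sum := by
  induction L with
  | nil => simp
  | cons a L ih =>
    simp only [List.map_cons, List.sum_cons]
    exact add_le_add (h a (by simp)) (ih (fun t ht => h t (by simp [ht])))

lemma list_sum_mul {ι : Type} (L : List ι) (f : ι → ℝ) (c : ℝ) :
    (L.map (fun t => f t * c)).sum = (L.map f).sum * c := by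
  induction L with
  | nil => simp
  | cons a L ih => simp [ih]; ring

def Kco (L : List T3) : ℝ := (L.map (fun t => |t.1|)).sum

lemma Kco_nonneg (L : List T3) : 0 ≤ Kco L := by
  rw [Kco]
  induction L with
  | nil => simp
  | cons a L ih => simp only [List.map_cons, List.sum_cons]; positivity

lemma valid_bound {v : P3 → ℝ} {U : Set P3} {Q : ℕ × ℕ × ℕ → Prop}
    {n l m : ℕ} {a M : ℝ} {L : List T3} {w : P3 → ℝ}
    (h : Valid ((l : ℝ) - a) v U Q n L w)
    (hnl : n ≤ l) (hlm : l ≤ m) (hM : 1 ≤ M)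
    (hUM : ∀ p ∈ U, rho3 p ≤ M) (hU0 : ∀ p ∈ U, sq3 p ≠ 0) :
    ∀ p ∈ U, |w p| ≤ (Kco L * M ^ (m : ℝ)) *
      ∑ γ ∈ idx3 m, rho3 p ^ ((wt3 γ : ℝ) - a) * |D3 γ v p| := by
  intro p hp
  set S : ℝ := ∑ γ ∈ idx3 m, rho3 p ^ ((wt3 γ : ℝ) - a) * |D3 γ v p| with hS
  have hSnn : 0 ≤ S := Finset.sum_nonneg (fun γ _ =>
    mul_nonneg (Real.rpow_nonneg (rho3_nonneg p) _) (abs_nonneg _))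
  have hρ : 0 < rho3 p := rho3_pos (hU0 p hp)
  -- per-term bound
  have hterm : ∀ t ∈ L, |tval ((l : ℝ) - a) n v t p| ≤ |t.1| * (M ^ (m : ℝ) * S) := by
    intro t ht
    obtain ⟨hwt, -⟩ := h.1 t ht
    have habs : |tval ((l : ℝ) - a) n v t p| =
        |t.1| * |tm t.2.1.1 t.2.1.2.1 t.2.1.2.2 (texp ((l : ℝ) - a) n t) p| * |D3 t.2.2 v p| := by
      rw [tval, abs_mul, abs_mul]
    rw [habs]
    have htm := tm_abs_le t.2.1.1 t.2.1.2.1 t.2.1.2.2 (texp ((l : ℝ) - a) n t) (hU0 p hp)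
    have hexp : (t.2.1.1 : ℝ) + t.2.1.2.1 + t.2.1.2.2 + texp ((l : ℝ) - a) n t
        = ((wt3 t.2.2 : ℝ) - a) + ((l : ℝ) - n) := by
      simp only [texp, mdeg, wt3]
      push_cast
      ring
    rw [hexp] at htm
    have hsplit : rho3 p ^ (((wt3 t.2.2 : ℝ) - a) + ((l : ℝ) - n))
        = rho3 p ^ ((wt3 t.2.2 : ℝ) - a) * rho3 p ^ ((l : ℝ) - n) := Real.rpow_add hρ _ _
    have hMb : rho3 p ^ ((l : ℝ) - n) ≤ M ^ (m : ℝ) := by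
      calc rho3 p ^ ((l : ℝ) - n) ≤ M ^ ((l : ℝ) - n) := by
            apply Real.rpow_le_rpow hρ.le (hUM p hp)
            have : (n : ℝ) ≤ (l : ℝ) := by exact_mod_cast hnl
            linarith
        _ ≤ M ^ (m : ℝ) := by
            apply Real.rpow_le_rpow_of_exponent_le hM
            have h1 : (l : ℝ) ≤ (m : ℝ) := by exact_mod_cast hlm
            have h2 : (0 : ℝ) ≤ (n : ℝ) := by positivity
            linarith
    have hsingle : rho3 p ^ ((wt3 t.2.2 : ℝ) - a) * |D3 t.2.2 v p| ≤ S := by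
      rw [hS]
      refine Finset.single_le_sum (f := fun γ => rho3 p ^ ((wt3 γ : ℝ) - a) * |D3 γ v p|)
        (fun γ _ => mul_nonneg (Real.rpow_nonneg (rho3_nonneg p) _) (abs_nonneg _))
        (mem_idx3 (le_trans hwt (le_trans hnl hlm)))
    calc |t.1| * |tm t.2.1.1 t.2.1.2.1 t.2.1.2.2 (texp ((l : ℝ) - a) n t) p| * |D3 t.2.2 v p|
        ≤ |t.1| * (rho3 p ^ ((wt3 t.2.2 : ℝ) - a) * rho3 p ^ ((l : ℝ) - n)) * |D3 t.2.2 v p| := by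
          rw [← hsplit]
          exact mul_le_mul_of_nonneg_right (mul_le_mul_of_nonneg_left htm (abs_nonneg _))
            (abs_nonneg _)
      _ = |t.1| * (rho3 p ^ ((l : ℝ) - n)) * (rho3 p ^ ((wt3 t.2.2 : ℝ) - a) * |D3 t.2.2 v p|) := by
          ring
      _ ≤ |t.1| * (M ^ (m : ℝ)) * S := by
          apply mul_le_mul
          · exact mul_le_mul_of_nonneg_left hMb (abs_nonneg _)
          · exact hsingle
          · exact mul_nonneg (Real.rpow_nonneg hρ.le _) (abs_nonneg _)
          · exact mul_nonneg (abs_nonneg _) (Real.rpow_nonneg (by linarith) _)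
      _ = |t.1| * (M ^ (m : ℝ) * S) := by ring
  calc |w p| = |(L.map (fun t => tval ((l : ℝ) - a) n v t p)).sum| := by rw [h.2 p hp]
    _ ≤ (L.map (fun t => |tval ((l : ℝ) - a) n v t p|)).sum := list_abs_sum_le _ _
    _ ≤ (L.map (fun t => |t.1| * (M ^ (m : ℝ) * S))).sum := list_sum_le _ _ _ hterm
    _ = Kco L * (M ^ (m : ℝ) * S) := list_sum_mul _ _ _
    _ = (Kco L * M ^ (m : ℝ)) * S := by ring

lemma contDiff_sq3 : ContDiff ℝ (⊤ : ℕ∞) sq3 := by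
  have h1 : ContDiff ℝ (⊤ : ℕ∞) (fun q : P3 => q.1) := contDiff_fst
  have h2 : ContDiff ℝ (⊤ : ℕ∞) (fun q : P3 => q.2.1) := contDiff_fst.comp contDiff_snd
  have h3 : ContDiff ℝ (⊤ : ℕ∞) (fun q : P3 => q.2.2) := contDiff_snd.comp contDiff_snd
  exact ((h1.pow 2).add (h2.pow 2)).add (h3.pow 2)

lemma contDiffOn_tm_mul {U : Set P3} (hU0 : ∀ p ∈ U, sq3 p ≠ 0) {v : P3 → ℝ}
    (hv : ContDiffOn ℝ (⊤ : ℕ∞) v U) (c0 : ℝ) :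
    ContDiffOn ℝ (⊤ : ℕ∞) (fun q => tm 0 0 0 c0 q * v q) U := by
  have h4 : ContDiffOn ℝ (⊤ : ℕ∞) (fun q => sq3 q ^ (c0 / 2)) U := fun p hp =>
    ((contDiff_sq3.contDiffAt).rpow_const_of_ne (hU0 p hp)).contDiffWithinAt
  have heq : (fun q => tm 0 0 0 c0 q * v q) = fun q => sq3 q ^ (c0 / 2) * v q := by
    funext q; simp [tm]
  rw [heq]
  exact h4.mul hv

lemma idx3_wt {β : ℕ × ℕ × ℕ} {l : ℕ} (h : β ∈ idx3 l) : wt3 β ≤ l := by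
  simp only [idx3, Finset.mem_filter] at h
  exact h.2

lemma main_beta {V : Set P3} (hVo : IsOpen V) {v : P3 → ℝ} {m l : ℕ} {a M : ℝ}
    (hv : ContDiffOn ℝ (⊤ : ℕ∞) v (V \ {0}))
    (hInt : ∀ α ∈ idx3 m,
      Integrable (fun p => (rho3 p ^ ((wt3 α : ℝ) - a) * D3 α v p) ^ 2) (volume.restrict V))
    (hlm : l ≤ m) (hM : 1 ≤ M) (hVM : ∀ p ∈ V, rho3 p ≤ M)
    {β : ℕ × ℕ × ℕ} (hβ : β ∈ idx3 l) :
    Integrable (fun p => (D3 β (fun q => tm 0 0 0 ((l : ℝ) - a) q * v q) p) ^ 2)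
      (volume.restrict V) ∧
    ∫ p in V, (D3 β (fun q => tm 0 0 0 ((l : ℝ) - a) q * v q) p) ^ 2 ≤
      ((idx3 m).card : ℝ) * (Kco (LB ((l : ℝ) - a) β) * M ^ (m : ℝ)) ^ 2 * WS3 V m a v := by
  set U : Set P3 := V \ {0} with hUdef
  have hU : IsOpen U := hVo.sdiff isClosed_singleton
  have hU0 : ∀ p ∈ U, sq3 p ≠ 0 := fun p hp => sq3_ne p (by simpa using hp.2)
  have hUM : ∀ p ∈ U, rho3 p ≤ M := fun p hp => hVM p hp.1
  set c0 : ℝ := (l : ℝ) - a with hc0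
  set wfun : P3 → ℝ := fun q => tm 0 0 0 c0 q * v q with hwfun
  set KB : ℝ := Kco (LB c0 β) * M ^ (m : ℝ) with hKB
  have hKBnn : 0 ≤ KB := mul_nonneg (Kco_nonneg _) (Real.rpow_nonneg (by linarith) _)
  set N : ℝ := ((idx3 m).card : ℝ) with hN
  have hNnn : (0:ℝ) ≤ N := by positivity
  -- validity & bound
  have hval := valid_LB (c0 := c0) hU hU0 hv β
  have hbd := valid_bound hval (idx3_wt hβ) hlm hM hUM hU0
  -- squared pointwise bound on U
  set g : P3 → ℝ := fun p => ∑ γ ∈ idx3 m, (rho3 p ^ ((wt3 γ : ℝ) - a) * D3 γ v p) ^ 2 with hg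
  have hptbd : ∀ p ∈ U, (D3 β wfun p) ^ 2 ≤ KB ^ 2 * N * g p := by
    intro p hp
    have h1 : |D3 β wfun p| ≤ KB * ∑ γ ∈ idx3 m, rho3 p ^ ((wt3 γ : ℝ) - a) * |D3 γ v p| :=
      hbd p hp
    have hSnn : 0 ≤ ∑ γ ∈ idx3 m, rho3 p ^ ((wt3 γ : ℝ) - a) * |D3 γ v p| :=
      Finset.sum_nonneg fun γ _ =>
        mul_nonneg (Real.rpow_nonneg (rho3_nonneg p) _) (abs_nonneg _)
    have h2 : (D3 β wfun p) ^ 2 ≤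
        (KB * ∑ γ ∈ idx3 m, rho3 p ^ ((wt3 γ : ℝ) - a) * |D3 γ v p|) ^ 2 := by
      rw [← sq_abs]
      exact pow_le_pow_left₀ (abs_nonneg _) h1 2
    have h3 : (∑ γ ∈ idx3 m, rho3 p ^ ((wt3 γ : ℝ) - a) * |D3 γ v p|) ^ 2 ≤
        N * ∑ γ ∈ idx3 m, (rho3 p ^ ((wt3 γ : ℝ) - a) * |D3 γ v p|) ^ 2 :=
      sq_sum_le_card_mul_sum_sq
    have h4 : ∑ γ ∈ idx3 m, (rho3 p ^ ((wt3 γ : ℝ) - a) * |D3 γ v p|) ^ 2 = g p := by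
      rw [hg]
      refine Finset.sum_congr rfl fun γ _ => ?_
      rw [mul_pow, mul_pow, sq_abs]
    calc (D3 β wfun p) ^ 2 ≤ (KB * ∑ γ ∈ idx3 m, rho3 p ^ ((wt3 γ : ℝ) - a) * |D3 γ v p|) ^ 2 :=
          h2
      _ = KB ^ 2 * (∑ γ ∈ idx3 m, rho3 p ^ ((wt3 γ : ℝ) - a) * |D3 γ v p|) ^ 2 := by ring
      _ ≤ KB ^ 2 * (N * ∑ γ ∈ idx3 m, (rho3 p ^ ((wt3 γ : ℝ) - a) * |D3 γ v p|) ^ 2) := by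
          apply mul_le_mul_of_nonneg_left h3 (by positivity)
      _ = KB ^ 2 * N * g p := by rw [h4]; ring
  -- integrability of the dominating function
  have hg_int : Integrable g (volume.restrict V) :=
    integrable_finset_sum _ (fun γ hγ => hInt γ hγ)
  have hG_int : Integrable (fun p => KB ^ 2 * N * g p) (volume.restrict V) :=
    hg_int.const_mul _
  -- a.e. membership
  have hae : ∀ᵐ p ∂(volume.restrict V), p ∈ U := by
    rw [restrict_V_eq V]
    exact ae_restrict_mem hU.measurableSet
  -- measurability
  have hsm := contDiffOn_tm_mul hU0 hv c0
  have hcont : ContinuousOn (D3 β wfun) U :=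
    (contDiffOn_D3 hU hsm β).continuousOn
  have haesm : AEStronglyMeasurable (D3 β wfun) (volume.restrict V) := by
    rw [restrict_V_eq V]
    exact hcont.aestronglyMeasurable hU.measurableSet
  have hsq_aesm : AEStronglyMeasurable (fun p => (D3 β wfun p) ^ 2) (volume.restrict V) := by
    have h := haesm.mul haesm
    have heq : (fun p => (D3 β wfun p) ^ 2) = fun p => D3 β wfun p * D3 β wfun p := by
      funext p; ring
    rw [heq]
    exact h
  -- integrability
  have hint : Integrable (fun p => (D3 β wfun p) ^ 2) (volume.restrict V) := by
    refine Integrable.mono' hG_int hsq_aesm ?_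
    filter_upwards [hae] with p hp
    rw [Real.norm_eq_abs, abs_of_nonneg (sq_nonneg _)]
    exact hptbd p hp
  refine ⟨hint, ?_⟩
  have hle : ∫ p in V, (D3 β wfun p) ^ 2 ≤ ∫ p in V, KB ^ 2 * N * g p := by
    refine integral_mono_ae hint hG_int ?_
    filter_upwards [hae] with p hp
    exact hptbd p hp
  have heval : ∫ p in V, KB ^ 2 * N * g p = N * KB ^ 2 * WS3 V m a v := by
    rw [integral_const_mul]
    rw [hg]
    rw [integral_finset_sum _ (fun γ hγ => hInt γ hγ)]
    rw [WS3]
    ring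
  calc ∫ p in V, (D3 β wfun p) ^ 2 ≤ ∫ p in V, KB ^ 2 * N * g p := hle
    _ = N * KB ^ 2 * WS3 V m a v := heval


set_option maxHeartbeats 1000000 in
/-- if Σ_{|α|≤m} ‖ρ^{-a+|α|} ∂^α v‖²_{L²(V)} < ∞ then for every l ≤ m,
ρ^{-a+l} v ∈ H^l(V) and ‖ρ^{-a+l} v‖²_{H^l(V)} ≤ C Σ_{|α|≤m} ‖ρ^{-a+|α|} ∂^α v‖²_{L²(V)},
with C depending only on m, a and V. -/
theorem stmt_3 (V : Set P3) (hVo : IsOpen V) (hVb : Bornology.IsBounded V)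
    (h0 : (0 : P3) ∈ V) (m : ℕ) (a : ℝ) :
    ∃ C > 0, ∀ v : P3 → ℝ, ContDiffOn ℝ (⊤ : ℕ∞) v (V \ {0}) →
      (∀ α ∈ idx3 m,
        Integrable (fun p => (rho3 p ^ ((wt3 α : ℝ) - a) * D3 α v p) ^ 2)
          (volume.restrict V)) →
      ∀ l ≤ m,
        (∀ α ∈ idx3 l,
          Integrable (fun p => (D3 α (fun q => rho3 q ^ ((l : ℝ) - a) * v q) p) ^ 2)
            (volume.restrict V)) ∧
        HN3 V l (fun q => rho3 q ^ ((l : ℝ) - a) * v q) ≤ C * WS3 V m a v := by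
  obtain ⟨R, hR⟩ := isBounded_iff_forall_norm_le.mp hVb
  set M : ℝ := max 1 (2 * (R + 1)) with hMdef
  have hM1 : (1:ℝ) ≤ M := le_max_left _ _
  have hVM : ∀ p ∈ V, rho3 p ≤ M := by
    intro p hp
    have h1 : ‖p‖ ≤ R := hR p hp
    have hx : |p.1| ≤ R := le_trans (by rw [← Real.norm_eq_abs]; exact norm_fst_le p) h1
    have hy : |p.2.1| ≤ R := by
      refine le_trans ?_ h1
      rw [← Real.norm_eq_abs]
      exact le_trans (norm_fst_le p.2) (norm_snd_le p)
    have hz : |p.2.2| ≤ R := by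
      refine le_trans ?_ h1
      rw [← Real.norm_eq_abs]
      exact le_trans (norm_snd_le p.2) (norm_snd_le p)
    have hR0 : 0 ≤ R := le_trans (norm_nonneg p) h1
    have hs : sq3 p ≤ (2 * (R + 1)) ^ 2 := by
      simp only [sq3]
      nlinarith [abs_nonneg p.1, abs_nonneg p.2.1, abs_nonneg p.2.2, sq_abs p.1,
        sq_abs p.2.1, sq_abs p.2.2]
    have : rho3 p ≤ 2 * (R + 1) := by
      rw [rho3, show p.1 ^ 2 + p.2.1 ^ 2 + p.2.2 ^ 2 = sq3 p from rfl]
      calc Real.sqrt (sq3 p) ≤ Real.sqrt ((2 * (R + 1)) ^ 2) := Real.sqrt_le_sqrt hs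
        _ = 2 * (R + 1) := by rw [Real.sqrt_sq (by linarith)]
    exact le_trans this (le_max_right _ _)
  set N : ℝ := ((idx3 m).card : ℝ) with hN
  have hNnn : (0:ℝ) ≤ N := by rw [hN]; positivity
  set C : ℝ := 1 + ∑ l' ∈ Finset.range (m + 1), ∑ β ∈ idx3 l',
      N * (Kco (LB ((l' : ℝ) - a) β) * M ^ (m : ℝ)) ^ 2 with hC
  have hCpos : 0 < C := by
    have : (0:ℝ) ≤ ∑ l' ∈ Finset.range (m + 1), ∑ β ∈ idx3 l',
        N * (Kco (LB ((l' : ℝ) - a) β) * M ^ (m : ℝ)) ^ 2 :=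
      Finset.sum_nonneg fun l' _ => Finset.sum_nonneg fun β _ =>
        mul_nonneg hNnn (sq_nonneg _)
    rw [hC]; linarith
  refine ⟨C, hCpos, ?_⟩
  intro v hv hInt l hlm
  have hw_eq : (fun q => rho3 q ^ ((l : ℝ) - a) * v q)
      = fun q => tm 0 0 0 ((l : ℝ) - a) q * v q := by
    funext q
    rw [rho3_rpow]
    simp [tm]
  have hWSnn : 0 ≤ WS3 V m a v :=
    Finset.sum_nonneg fun γ _ => integral_nonneg fun p => sq_nonneg _
  constructor
  · intro α hα
    rw [hw_eq]
    exact (main_beta hVo hv hInt hlm hM1 hVM hα).1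
  · rw [hw_eq, HN3]
    have hsum : ∑ β ∈ idx3 l, ∫ p in V, (D3 β (fun q => tm 0 0 0 ((l : ℝ) - a) q * v q) p) ^ 2
        ≤ ∑ β ∈ idx3 l, N * (Kco (LB ((l : ℝ) - a) β) * M ^ (m : ℝ)) ^ 2 * WS3 V m a v :=
      Finset.sum_le_sum fun β hβ => (main_beta hVo hv hInt hlm hM1 hVM hβ).2
    refine le_trans hsum ?_
    rw [← Finset.sum_mul]
    refine mul_le_mul_of_nonneg_right ?_ hWSnn
    have hl_mem : l ∈ Finset.range (m + 1) := Finset.mem_range.mpr (by omega)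
    have hsingle : ∑ β ∈ idx3 l, N * (Kco (LB ((l : ℝ) - a) β) * M ^ (m : ℝ)) ^ 2
        ≤ ∑ l' ∈ Finset.range (m + 1), ∑ β ∈ idx3 l',
          N * (Kco (LB ((l' : ℝ) - a) β) * M ^ (m : ℝ)) ^ 2 :=
      Finset.single_le_sum (f := fun l' => ∑ β ∈ idx3 l',
        N * (Kco (LB ((l' : ℝ) - a) β) * M ^ (m : ℝ)) ^ 2)
        (fun l' _ => Finset.sum_nonneg fun β _ => mul_nonneg hNnn (sq_nonneg _)) hl_mem
    rw [hC]
    linarith
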